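/- Let R be a commutative ring and q ∈ Rˣ a unit such that [n]_q := 1 − q^{−n} is a unit of R for every n ≥ 1, A an associative unital R-algebra, x ∈ A nilpotent, and y ∈ A with y·x = q • (x·y). Then 𝓔_q(x) and 1 − q•x are units of A, and conjugation by the q-dilogarithm acts on y as the elementary q-cluster transformation: 𝓔_q(x)^{−1} · y · 𝓔_q(x) = (1 − q•x)^{−1} · y. Equivalently, y · 𝓔_q(x) = (1 − q•x)^{−1} · 𝓔_q(x) · y. -/

import Mathlib

/-- The q-number `[n]_q = 1 - q^{-n}`, for a unit `q` of a commutative ring `R`. -/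
noncomputable def qNumU {R : Type*} [CommRing R] (q : Rˣ) (n : ℕ) : R :=
  1 - ((q⁻¹ : Rˣ) : R) ^ n

/-- The q-factorial `[n]_q! = [1]_q [2]_q ⋯ [n]_q`, with `[0]_q! = 1`. -/
noncomputable def qFactU {R : Type*} [CommRing R] (q : Rˣ) : ℕ → R
  | 0 => 1
  | n + 1 => qFactU q n * qNumU q (n + 1)

/-- The exponentiated q-dilogarithm `𝓔_q(z) = Σ_{n≥0} ([n]_q!)⁻¹ • z^n` of an algebra
element `z`; for nilpotent `z` this finitary sum (`finsum`) is the evident finite sum. -/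
noncomputable def qE {R : Type*} [CommRing R] {A : Type*} [Ring A] [Algebra R A]
    (q : Rˣ) (z : A) : A :=
  ∑ᶠ n : ℕ, Ring.inverse (qFactU q n) • z ^ n

/-- Conjugation by the q-dilogarithm is the elementary q-cluster transformation:
for `x` nilpotent and `y x = q • (x y)`, both `𝓔_q(x)` and `1 - q • x` are units, and
`𝓔_q(x)⁻¹ · y · 𝓔_q(x) = (1 - q • x)⁻¹ · y`; equivalently
`y · 𝓔_q(x) = (1 - q • x)⁻¹ · 𝓔_q(x) · y`. -/
theorem qE_conjugation {R : Type*} [CommRing R] (q : Rˣ)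
    (hU : ∀ n : ℕ, 1 ≤ n → IsUnit (qNumU q n))
    {A : Type*} [Ring A] [Algebra R A]
    (x : A) (hx : IsNilpotent x) (y : A) (hcomm : y * x = (q : R) • (x * y)) :
    IsUnit (qE q x) ∧ IsUnit (1 - (q : R) • x) ∧
      Ring.inverse (qE q x) * y * qE q x = Ring.inverse (1 - (q : R) • x) * y ∧
      y * qE q x = Ring.inverse (1 - (q : R) • x) * (qE q x * y) := by
  classical
  obtain ⟨N₀, hN₀⟩ := hx
  set M := N₀ + 1 with hMdef
  have hM : x ^ M = 0 := by rw [hMdef, pow_succ, hN₀, zero_mul]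
  have hxnil : IsNilpotent x := ⟨M, hM⟩
  -- coefficient functions
  set F : ℕ → R := fun n => Ring.inverse (qFactU q n) with hF
  set G : ℕ → R := fun n => (q : R) ^ n * F n with hG
  have hFactU : ∀ n : ℕ, IsUnit (qFactU q n) := by
    intro n
    induction n with
    | zero => simp [qFactU]
    | succ n ih => exact ih.mul (hU (n+1) (Nat.le_add_left 1 n))
  have hF0 : F 0 = 1 := by simp [hF, qFactU]
  have hG0 : G 0 = 1 := by simp [hG, hF0]
  -- F n = [n+1] * F (n+1)
  have hFrec : ∀ n : ℕ, F n = qNumU q (n+1) * F (n+1) := by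
    intro n
    apply (hFactU (n+1)).mul_left_cancel
    have h1 : qFactU q (n+1) = qFactU q n * qNumU q (n+1) := rfl
    calc qFactU q (n+1) * F n
        = qNumU q (n+1) * (qFactU q n * F n) := by rw [h1]; ring
      _ = qNumU q (n+1) := by
          rw [hF, Ring.mul_inverse_cancel _ (hFactU n), mul_one]
      _ = qFactU q (n+1) * (qNumU q (n+1) * F (n+1)) := by
          rw [hF]
          calc qNumU q (n+1)
              = qNumU q (n+1) * (qFactU q (n+1) * Ring.inverse (qFactU q (n+1))) := by
                rw [Ring.mul_inverse_cancel _ (hFactU (n+1)), mul_one]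
            _ = qFactU q (n+1) * (qNumU q (n+1) * Ring.inverse (qFactU q (n+1))) := by ring
  have hkey : ∀ n : ℕ, (q : R) ^ (n+1) * ((q⁻¹ : Rˣ) : R) ^ (n+1) = 1 := by
    intro n
    rw [← mul_pow]
    norm_cast
    rw [mul_inv_cancel, one_pow]
    rfl
  have hGrec : ∀ n : ℕ, G (n+1) = (q : R) * G n + F (n+1) := by
    intro n
    have h1 : G (n+1) = (q:R)^(n+1) * F (n+1) := rfl
    have h2 : G n = (q:R)^n * F n := rfl
    rw [h1, h2, hFrec n, qNumU]
    linear_combination (F (n+1)) * hkey n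
  -- finite sums
  set E : A := ∑ n ∈ Finset.range M, F n • x ^ n with hE
  set S : A := ∑ n ∈ Finset.range M, G n • x ^ n with hS
  have hpow0 : ∀ n : ℕ, M ≤ n → x ^ n = 0 := fun n hn => pow_eq_zero_of_le hn hM
  have hqEx : qE q x = E := by
    rw [qE, hE]
    apply finsum_eq_sum_of_support_subset
    intro n hn
    simp only [Function.mem_support, Ne] at hn
    simp only [Finset.coe_range, Set.mem_Iio]
    by_contra h
    exact hn (by rw [hpow0 n (le_of_not_gt h), smul_zero])
  -- q-commutation for powers
  have hcommn : ∀ n : ℕ, y * x ^ n = ((q : R) ^ n) • (x ^ n * y) := by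
    intro n
    induction n with
    | zero => simp
    | succ n ih =>
      calc y * x ^ (n+1) = (y * x ^ n) * x := by rw [pow_succ, mul_assoc]
        _ = ((q:R)^n • (x^n * y)) * x := by rw [ih]
        _ = (q:R)^n • (x^n * (y * x)) := by rw [smul_mul_assoc, mul_assoc]
        _ = (q:R)^n • (x^n * ((q:R) • (x * y))) := by rw [hcomm]
        _ = ((q:R)^n * (q:R)) • (x^n * x * y) := by
              rw [mul_smul_comm, smul_smul, mul_assoc]
        _ = (q:R)^(n+1) • (x^(n+1) * y) := by rw [← pow_succ, ← pow_succ]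
  -- y * E = S * y
  have hyE : y * E = S * y := by
    rw [hE, hS, Finset.mul_sum, Finset.sum_mul]
    apply Finset.sum_congr rfl
    intro n _
    rw [mul_smul_comm, hcommn n, smul_smul, smul_mul_assoc, mul_comm]
  -- (q•x) * S = S - E
  have hqxS : ((q : R) • x) * S = S - E := by
    have lhs : ((q : R) • x) * S
        = ∑ n ∈ Finset.range N₀, ((q:R) * G n) • x ^ (n+1) := by
      rw [hS, Finset.mul_sum, hMdef, Finset.sum_range_succ]
      have : ((q:R) • x) * (G N₀ • x ^ N₀) = ((q:R) * G N₀) • x ^ M := by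
        rw [smul_mul_assoc, mul_smul_comm, smul_smul, ← pow_succ']
      rw [this, hpow0 M le_rfl, smul_zero, add_zero]
      apply Finset.sum_congr rfl
      intro n _
      rw [smul_mul_assoc, mul_smul_comm, smul_smul, ← pow_succ']
    have rhs : S - E = ∑ n ∈ Finset.range N₀, ((q:R) * G n) • x ^ (n+1) := by
      rw [hS, hE, ← Finset.sum_sub_distrib]
      simp_rw [← sub_smul]
      rw [hMdef, Finset.sum_range_succ']
      rw [hG0, hF0, sub_self, zero_smul, add_zero]
      apply Finset.sum_congr rfl
      intro n _
      rw [hGrec n]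
      ring_nf
    rw [lhs, rhs]
  have hfact : (1 - (q : R) • x) * S = E := by
    rw [sub_mul, one_mul, hqxS]
    abel
  -- units
  have hu1 : IsUnit (1 - (q : R) • x) :=
    IsNilpotent.isUnit_one_sub (hxnil.smul (q : R))
  have hu2 : IsUnit E := by
    have hE' : E = 1 + (∑ n ∈ Finset.range N₀, F (n+1) • x ^ n) * x := by
      rw [hE, hMdef, Finset.sum_range_succ']
      rw [hF0, pow_zero, one_smul, add_comm, Finset.sum_mul]
      congr 1
      apply Finset.sum_congr rfl
      intro n _
      rw [smul_mul_assoc, ← pow_succ]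
    rw [hE']
    apply IsNilpotent.isUnit_one_add
    apply Commute.isNilpotent_mul_left _ hxnil
    apply Commute.sum_left
    intro n _
    exact ((Commute.refl x).pow_left n).smul_left _
  -- Commute (1 - q•x) S
  have hcommS : Commute (1 - (q : R) • x) S := by
    apply Commute.sub_left (Commute.one_left S)
    apply Commute.smul_left
    apply Commute.sum_right
    intro n _
    exact ((Commute.refl x).pow_right n).smul_right _
  have hSinv : S = Ring.inverse (1 - (q : R) • x) * E := by
    rw [← hfact, Ring.inverse_mul_cancel_left _ _ hu1]
  have hinvES : Ring.inverse E * S = Ring.inverse (1 - (q : R) • x) := by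
    apply hu2.mul_left_cancel
    rw [Ring.mul_inverse_cancel_left _ _ hu2]
    rw [← hfact, hcommS.eq, mul_assoc, Ring.mul_inverse_cancel _ hu1, mul_one]
  refine ⟨?_, hu1, ?_, ?_⟩
  · rw [hqEx]; exact hu2
  · rw [hqEx, mul_assoc, hyE, ← mul_assoc, hinvES]
  · rw [hqEx, hyE, hSinv, mul_assoc]
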